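/- Let f : ℝ^d → ℝ be C², f ≥ 0, with zero set M nonempty and ∇f vanishing on M. Suppose x₀ has a nearest point x_M ∈ M with ‖x₀ − x_M‖ = d(x₀, M), that vᵀH_f(y)v ≥ μ‖v‖² for v = x₀ − x_M and all y on the segment [x_M, x₀] (with μ > 0). Then ‖∇f(x₀)‖ ≥ μ · d(x₀, M). -/

import Mathlib

open Metric Set

/-- Let `f : ℝ^d → ℝ` be `C²`, `f ≥ 0`, with zero set `M` nonempty and
`∇f` vanishing on `M`.  Suppose `x₀` has a nearest point `x_M ∈ M` with
`‖x₀ − x_M‖ = d(x₀, M)`, and that `vᵀ H_f(y) v ≥ μ ‖v‖²` for `v = x₀ − x_M` and all `y`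
on the segment `[x_M, x₀]` (with `μ > 0`).  Then `‖∇f(x₀)‖ ≥ μ · d(x₀, M)`. -/
theorem grad_norm_lower_bound
    (n : ℕ)
    (f : EuclideanSpace ℝ (Fin n) → ℝ)
    (hf : ContDiff ℝ 2 f) (hf0 : ∀ x, 0 ≤ f x)
    (M : Set (EuclideanSpace ℝ (Fin n)))
    (hM : M = {x | f x = 0}) (hMne : M.Nonempty)
    (μ : ℝ) (hμ : 0 < μ)
    (x₀ xM : EuclideanSpace ℝ (Fin n))
    (hxM : xM ∈ M) (hproj : dist x₀ xM = infDist x₀ M)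
    (hgradM : gradient f xM = 0)
    (hHess : ∀ y ∈ segment ℝ xM x₀,
      μ * ‖x₀ - xM‖ ^ 2 ≤
        inner (𝕜 := ℝ) (x₀ - xM) (fderiv ℝ (fun z => gradient f z) y (x₀ - xM))) :
    μ * infDist x₀ M ≤ ‖gradient f x₀‖ := by
  set v : EuclideanSpace ℝ (Fin n) := x₀ - xM with hv
  have hdist : infDist x₀ M = ‖v‖ := by
    rw [← hproj, dist_eq_norm]
  rcases eq_or_ne v 0 with h0 | h0
  · rw [hdist, h0, norm_zero, mul_zero]
    exact norm_nonneg _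
  have hvpos : (0:ℝ) < ‖v‖ := norm_pos_iff.mpr h0
  -- gradient is C¹
  have hG : ContDiff ℝ 1 (fun z => gradient f z) := by
    have : (fun z => gradient f z) =
        fun z => (InnerProductSpace.toDual ℝ (EuclideanSpace ℝ (Fin n))).symm
          (fderiv ℝ f z) := by
      funext z; rfl
    rw [this]
    exact (InnerProductSpace.toDual ℝ
      (EuclideanSpace ℝ (Fin n))).symm.toContinuousLinearEquiv.contDiff.comp
      (hf.fderiv_right (le_refl _))
  have hGdiff : Differentiable ℝ (fun z => gradient f z) :=
    hG.differentiable one_ne_zero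
  -- the path and the scalar function
  set γ : ℝ → EuclideanSpace ℝ (Fin n) := fun t => xM + t • v with hγ
  set φ : ℝ → ℝ := fun t => inner (𝕜 := ℝ) v (gradient f (γ t)) with hφ
  have hγseg : ∀ t ∈ Icc (0:ℝ) 1, γ t ∈ segment ℝ xM x₀ := by
    intro t ht
    rw [segment_eq_image']
    exact ⟨t, ht, rfl⟩
  have hderiv : ∀ t : ℝ, HasDerivAt φ
      (inner (𝕜 := ℝ) v (fderiv ℝ (fun z => gradient f z) (γ t) v)) t := by
    intro t
    have hγd : HasDerivAt γ v t := by
      have h1 : HasDerivAt (fun t : ℝ => t • v) ((1:ℝ) • v) t :=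
        (hasDerivAt_id t).smul_const v
      have h2 := h1.const_add xM
      rw [one_smul] at h2
      exact h2
    have hGd : HasFDerivAt (fun z => gradient f z)
        (fderiv ℝ (fun z => gradient f z) (γ t)) (γ t) :=
      (hGdiff (γ t)).hasFDerivAt
    have hcomp : HasDerivAt (fun t => gradient f (γ t))
        (fderiv ℝ (fun z => gradient f z) (γ t) v) t :=
      hGd.comp_hasDerivAt t hγd
    have := ((innerSL ℝ v).hasFDerivAt).comp_hasDerivAt t hcomp
    exact this
  -- MVT
  have hφdiff : ∀ t : ℝ, DifferentiableAt ℝ φ t :=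
    fun t => (hderiv t).differentiableAt
  obtain ⟨c, hc, hcd⟩ := exists_hasDerivAt_eq_slope φ
      (fun t => inner (𝕜 := ℝ) v (fderiv ℝ (fun z => gradient f z) (γ t) v))
      (by norm_num : (0:ℝ) < 1)
      (fun t _ => (hφdiff t).continuousAt.continuousWithinAt)
      (fun t _ => hderiv t)
  have hφ0 : φ 0 = 0 := by
    simp only [hφ, hγ, zero_smul, add_zero, hgradM, inner_zero_right]
  have hφ1 : φ 1 = inner (𝕜 := ℝ) v (gradient f x₀) := by
    have : γ 1 = x₀ := by simp [hγ, hv]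
    simp [hφ, this]
  have hkey : μ * ‖v‖ ^ 2 ≤ inner (𝕜 := ℝ) v (gradient f x₀) := by
    have hseg : γ c ∈ segment ℝ xM x₀ :=
      hγseg c ⟨le_of_lt hc.1, le_of_lt hc.2⟩
    have := hHess (γ c) hseg
    rw [hcd] at this
    rw [hφ0, hφ1] at this
    simpa using this
  -- Cauchy–Schwarz
  have hcs : inner (𝕜 := ℝ) v (gradient f x₀) ≤ ‖v‖ * ‖gradient f x₀‖ :=
    real_inner_le_norm _ _
  rw [hdist]
  have h2 : μ * ‖v‖ ^ 2 ≤ ‖v‖ * ‖gradient f x₀‖ := hkey.trans hcs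
  nlinarith [norm_nonneg (gradient f x₀)]
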